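/- A complete lattice L is completely distributive if and only if every element y ∈ L satisfies y = ⋀{a ∈ L | a ≻ y}, where ≻ is the well-above relation. -/

import Mathlib

universe u

/-- `wellAbove y x` means `y` is well above `x`: whenever `x ≥ ⨅ S` there is `s ∈ S` with `s ≤ y`. -/
def wellAbove {L : Type*} [CompleteLattice L] (y x : L) : Prop :=
  ∀ S : Set L, sInf S ≤ x → ∃ s ∈ S, s ≤ y

/-- a complete lattice is completely distributive iff every
element is the meet of the elements well above it. -/
theorem completelyDistrib_iff_wellAbove {L : Type u} [CompleteLattice L] :
    (∀ {ι : Type u} {κ : ι → Type u} (f : ∀ i : ι, κ i → L),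
        (⨅ i, ⨆ j, f i j) = ⨆ g : ∀ i, κ i, ⨅ i, f i (g i)) ↔
      ∀ y : L, y = sInf {a : L | wellAbove a y} := by
  constructor
  · intro h y
    -- from the law, get the dual law via mathlib's MinimalAxioms machinery
    let minAx : CompletelyDistribLattice.MinimalAxioms L :=
      { (inferInstance : CompleteLattice L) with iInf_iSup_eq := fun f => h f }
    have hdual : ∀ {ι : Type u} {κ : ι → Type u} (f : ∀ i : ι, κ i → L),
        (⨆ i, ⨅ j, f i j) = ⨅ g : ∀ i, κ i, ⨆ i, f i (g i) := fun f =>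
      by letI := CompletelyDistribLattice.ofMinimalAxioms minAx; exact iSup_iInf_eq (f := f)
    refine le_antisymm (le_sInf fun a ha => ?_) ?_
    · obtain ⟨s, hs, hsa⟩ := ha {y} (by simp)
      simp only [Set.mem_singleton_iff] at hs
      exact hs ▸ hsa
    · -- sInf {a | wellAbove a y} ≤ y
      set ι : Type u := {S : Set L // sInf S ≤ y} with hι
      have hy : y = ⨆ S : ι, ⨅ s : S.1, (s : L) := by
        refine le_antisymm ?_ (iSup_le fun S => ?_)
        · exact le_iSup_of_le ⟨{y}, by simp⟩ (by simp)
        · calc (⨅ s : S.1, (s : L)) = sInf S.1 := (sInf_eq_iInf' S.1).symm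
            _ ≤ y := S.2
      have key : sInf {a : L | wellAbove a y} ≤ ⨅ g : ∀ S : ι, S.1, ⨆ S : ι, ((g S : L)) := by
        refine le_iInf fun g => sInf_le ?_
        intro T hT
        exact ⟨g ⟨T, hT⟩, (g ⟨T, hT⟩).2, le_iSup (fun S : ι => ((g S : L))) ⟨T, hT⟩⟩
      exact key.trans (hy.trans (hdual fun S : ι => fun s : S.1 => (s : L))).ge
  · intro h ι κ f
    -- first prove the dual law directly
    have hdual : ∀ {ι : Type u} {κ : ι → Type u} (f : ∀ i : ι, κ i → L),
        (⨆ i, ⨅ j, f i j) = ⨅ g : ∀ i, κ i, ⨆ i, f i (g i) := by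
      intro ι κ f
      refine le_antisymm iSup_iInf_le ?_
      conv_rhs => rw [h (⨆ i, ⨅ j, f i j)]
      refine le_sInf fun a ha => ?_
      have hsel : ∀ i : ι, ∃ j : κ i, f i j ≤ a := by
        intro i
        have hin : sInf (Set.range (f i)) ≤ ⨆ i, ⨅ j, f i j := le_iSup_of_le i sInf_range.le
        obtain ⟨s, hs, hsa⟩ := ha (Set.range (f i)) hin
        obtain ⟨j, rfl⟩ := hs
        exact ⟨j, hsa⟩
      choose g hg using hsel
      exact le_trans (iInf_le _ g) (iSup_le hg)
    -- package into minimal axioms for the dual lattice, use mathlib's dualization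
    let minAx : CompletelyDistribLattice.MinimalAxioms Lᵒᵈ :=
      { (inferInstance : CompleteLattice Lᵒᵈ) with
        iInf_iSup_eq := fun {ι} {κ} f => hdual (ι := ι) (κ := κ) f }
    letI := CompletelyDistribLattice.ofMinimalAxioms minAx
    exact iSup_iInf_eq (α := Lᵒᵈ) (ι := ι) (κ := κ) (f := f)
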